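/- Let α > 1 and let 0 < t_s < τ. Then the quantity χ_s(τ) := ∫_{t_s}^{τ} (τ^α / t^α) · (τ^{2α} − t^{2α})^{−1/2} dt is strictly less than t_s^{1−α}/(α−1). -/

import Mathlib

open Real MeasureTheory intervalIntegral

open Set

/-- For `α > 1` and `0 < t_s < τ`, the χ-coordinate
`χ_s(τ) = ∫_{t_s}^{τ} (τ^α / t^α) (τ^{2α} - t^{2α})^{-1/2} dt` is strictly less than
the event-horizon coordinate `t_s^{1-α}/(α-1)`. -/
theorem chi_s_lt_chi_horiz (α ts τ : ℝ) (hα : 1 < α) (hts : 0 < ts) (hτ : ts < τ) :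
    (∫ t in ts..τ, (τ ^ α / t ^ α) * (τ ^ (2 * α) - t ^ (2 * α)) ^ (-(1 : ℝ) / 2))
      < ts ^ (1 - α) / (α - 1) := by
  have hτ0 : 0 < τ := hts.trans hτ
  have hα1 : (0:ℝ) < α - 1 := by linarith
  set f : ℝ → ℝ := fun t => (τ ^ α / t ^ α) * (τ ^ (2 * α) - t ^ (2 * α)) ^ (-(1 : ℝ) / 2) with hf
  set F : ℝ → ℝ := fun t => -(τ ^ (-α) / (α - 1)) *
      (t ^ (1 - α) * (τ ^ (2*α) - t ^ (2*α)) ^ ((1:ℝ)/2)) with hF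
  set D : ℝ → ℝ := fun t => τ ^ (-α) *
      (t ^ (-α) * (τ ^ (2*α) - t ^ (2*α)) ^ ((1:ℝ)/2)
        + α/(α-1) * (t ^ α * (τ ^ (2*α) - t ^ (2*α)) ^ (-(1:ℝ)/2))) with hD
  -- positivity of h on [ts, τ)
  have hh : ∀ t, 0 < t → t < τ → 0 < τ ^ (2*α) - t ^ (2*α) := by
    intro t ht0 htτ
    have := Real.rpow_lt_rpow ht0.le htτ (by positivity : (0:ℝ) < 2*α)
    linarith
  -- derivative
  have hFderiv : ∀ t ∈ Ioo ts τ, HasDerivAt F (D t) t := by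
    intro t ht
    have ht0 : 0 < t := hts.trans ht.1
    have hht : 0 < τ ^ (2*α) - t ^ (2*α) := hh t ht0 ht.2
    have H1 : HasDerivAt (fun x : ℝ => x ^ (1-α)) ((1-α) * t ^ (1-α-1)) t :=
      Real.hasDerivAt_rpow_const (Or.inl ht0.ne')
    have H2 : HasDerivAt (fun x : ℝ => x ^ (2*α)) (2*α * t ^ (2*α-1)) t :=
      Real.hasDerivAt_rpow_const (Or.inl ht0.ne')
    have H3 : HasDerivAt (fun x : ℝ => τ ^ (2*α) - x ^ (2*α)) (-(2*α * t ^ (2*α-1))) t :=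
      H2.const_sub _
    have H4 : HasDerivAt (fun x : ℝ => (τ ^ (2*α) - x ^ (2*α)) ^ ((1:ℝ)/2))
        (-(2*α * t ^ (2*α-1)) * ((1:ℝ)/2) * (τ ^ (2*α) - t ^ (2*α)) ^ ((1:ℝ)/2 - 1)) t :=
      H3.rpow_const (Or.inl hht.ne')
    have H5 := (H1.mul H4).const_mul (-(τ ^ (-α) / (α - 1)))
    convert H5 using 1
    case e'_4 => rfl
    case e'_5 => rfl
    case e'_8 => rfl
    have e0 : (1 : ℝ) - α - 1 = -α := by ring
    have e0' : ((1:ℝ)/2 - 1) = (-(1:ℝ)/2) := by norm_num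
    rw [e0, e0']
    have e1 : t ^ (1-α) * t ^ (2*α-1) = t ^ α := by
      rw [← Real.rpow_add ht0]; congr 1; ring
    simp only [hD]
    rw [← e1]
    field_simp
    ring
  -- f ≤ D on Icc
  have hle : ∀ t ∈ Icc ts τ, f t ≤ D t := by
    intro t ht
    have ht0 : 0 < t := lt_of_lt_of_le hts ht.1
    rcases eq_or_lt_of_le ht.2 with rfl | htτ
    · have h0 : t ^ (2*α) - t ^ (2*α) = 0 := sub_self _
      simp only [hf, hD, h0, Real.zero_rpow (by norm_num : (-(1:ℝ)/2) ≠ 0),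
        Real.zero_rpow (by norm_num : ((1:ℝ)/2) ≠ 0)]
      simp
    · have hht : 0 < τ ^ (2*α) - t ^ (2*α) := hh t ht0 htτ
      have hdiv : τ ^ α / t ^ α = τ ^ α * t ^ (-α) := by
        rw [Real.rpow_neg ht0.le]; ring
      have eτ : τ ^ α = τ ^ (2*α) * τ ^ (-α) := by
        rw [← Real.rpow_add hτ0]; congr 1; ring
      have eh : (τ ^ (2*α) - t ^ (2*α)) * (τ ^ (2*α) - t ^ (2*α)) ^ (-(1:ℝ)/2)
          = (τ ^ (2*α) - t ^ (2*α)) ^ ((1:ℝ)/2) := by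
        nth_rewrite 1 [← Real.rpow_one (τ ^ (2*α) - t ^ (2*α))]
        rw [← Real.rpow_add hht]; norm_num
      have et : t ^ (2*α) * t ^ (-α) = t ^ α := by
        rw [← Real.rpow_add ht0]; congr 1; ring
      have key : f t = τ ^ (-α) *
          (t ^ (-α) * (τ ^ (2*α) - t ^ (2*α)) ^ ((1:ℝ)/2)
            + t ^ α * (τ ^ (2*α) - t ^ (2*α)) ^ (-(1:ℝ)/2)) := by
        rw [hf]
        simp only
        rw [hdiv, eτ, ← eh, ← et]
        ring
      rw [key, hD]
      simp only
      have hE : (0:ℝ) ≤ t ^ α * (τ ^ (2*α) - t ^ (2*α)) ^ (-(1:ℝ)/2) := by positivity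
      have h1 : t ^ α * (τ ^ (2*α) - t ^ (2*α)) ^ (-(1:ℝ)/2)
          ≤ α/(α-1) * (t ^ α * (τ ^ (2*α) - t ^ (2*α)) ^ (-(1:ℝ)/2)) := by
        apply le_mul_of_one_le_left hE
        rw [one_le_div hα1]; linarith
      have hτn : (0:ℝ) ≤ τ ^ (-α) := by positivity
      exact mul_le_mul_of_nonneg_left (by linarith) hτn
  -- D nonneg
  have hDpos : ∀ t ∈ Ioo ts τ, 0 ≤ D t := by
    intro t ht
    have ht0 : 0 < t := hts.trans ht.1
    have hht : 0 < τ ^ (2*α) - t ^ (2*α) := hh t ht0 ht.2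
    rw [hD]
    have h1 : (0:ℝ) ≤ t ^ (-α) * (τ ^ (2*α) - t ^ (2*α)) ^ ((1:ℝ)/2) := by positivity
    have h2 : (0:ℝ) ≤ α/(α-1) * (t ^ α * (τ ^ (2*α) - t ^ (2*α)) ^ (-(1:ℝ)/2)) := by positivity
    positivity
  -- continuity of F on Icc
  have hFcont : ContinuousOn F (Icc ts τ) := by
    apply ContinuousOn.mul continuousOn_const
    apply ContinuousOn.mul
    · exact ContinuousOn.rpow_const continuousOn_id
        (fun t ht => Or.inl (ne_of_gt (lt_of_lt_of_le hts ht.1)))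
    · apply ContinuousOn.rpow_const
      · exact continuousOn_const.sub (ContinuousOn.rpow_const continuousOn_id
          (fun t ht => Or.inl (ne_of_gt (lt_of_lt_of_le hts ht.1))))
      · intro t ht; exact Or.inr (by norm_num)
  -- integrability of D
  have hDint : IntervalIntegrable D volume ts τ := by
    rw [intervalIntegrable_iff_integrableOn_Ioc_of_le hτ.le]
    exact integrableOn_deriv_of_nonneg hFcont hFderiv hDpos
  -- integrability of f
  have hfmeas : AEStronglyMeasurable f (volume.restrict (Set.uIoc ts τ)) := by
    apply Measurable.aestronglyMeasurable
    fun_prop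
  have hfint : IntervalIntegrable f volume ts τ := by
    apply hDint.mono_fun' hfmeas
    rw [Set.uIoc_of_le hτ.le]
    apply Filter.eventually_of_mem (self_mem_ae_restrict measurableSet_Ioc)
    intro t ht
    have ht0 : 0 < t := hts.trans ht.1
    have hh0 : 0 ≤ τ ^ (2*α) - t ^ (2*α) := by
      have := Real.rpow_le_rpow ht0.le ht.2 (by positivity : (0:ℝ) ≤ 2*α)
      linarith
    have hf0 : 0 ≤ f t := by rw [hf]; positivity
    show ‖f t‖ ≤ D t
    rw [Real.norm_eq_abs, abs_of_nonneg hf0]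
    exact hle t ⟨ht.1.le, ht.2⟩
  -- FTC
  have hFTC : (∫ t in ts..τ, D t) = F τ - F ts :=
    integral_eq_sub_of_hasDeriv_right_of_le hτ.le hFcont
      (fun x hx => (hFderiv x hx).hasDerivWithinAt) hDint
  have hFτ : F τ = 0 := by
    rw [hF]; simp [sub_self, Real.zero_rpow (by norm_num : ((1:ℝ)/2) ≠ 0)]
  have hmono : (∫ t in ts..τ, f t) ≤ ∫ t in ts..τ, D t :=
    integral_mono_on hτ.le hfint hDint hle
  -- final bound
  have hhs : 0 < τ ^ (2*α) - ts ^ (2*α) := hh ts hts hτ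
  have hC : (τ ^ (2*α) - ts ^ (2*α)) ^ ((1:ℝ)/2) < τ ^ α := by
    have h2 : τ ^ (2*α) - ts ^ (2*α) < τ ^ (2*α) := by
      have : (0:ℝ) < ts ^ (2*α) := by positivity
      linarith
    calc (τ ^ (2*α) - ts ^ (2*α)) ^ ((1:ℝ)/2)
        < (τ ^ (2*α)) ^ ((1:ℝ)/2) := Real.rpow_lt_rpow hhs.le h2 (by norm_num)
      _ = τ ^ α := by rw [← Real.rpow_mul hτ0.le]; congr 1; ring
  have hlast : -F ts < ts ^ (1-α) / (α-1) := by
    have hτα : τ ^ (-α) * τ ^ α = 1 := by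
      rw [← Real.rpow_add hτ0]; simp
    have hC' : τ ^ (-α) * (τ ^ (2*α) - ts ^ (2*α)) ^ ((1:ℝ)/2) < 1 := by
      calc τ ^ (-α) * (τ ^ (2*α) - ts ^ (2*α)) ^ ((1:ℝ)/2)
          < τ ^ (-α) * τ ^ α := by
            apply mul_lt_mul_of_pos_left hC (by positivity)
        _ = 1 := hτα
    have hts1 : (0:ℝ) < ts ^ (1-α) := by positivity
    have hL : -F ts = (τ ^ (-α) * (τ ^ (2*α) - ts ^ (2*α)) ^ ((1:ℝ)/2)) * ts ^ (1-α) / (α-1) := by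
      simp only [hF]; ring
    rw [hL]
    exact (div_lt_div_iff_of_pos_right hα1).mpr (mul_lt_of_lt_one_left hts1 hC')
  calc (∫ t in ts..τ, f t) ≤ ∫ t in ts..τ, D t := hmono
    _ = F τ - F ts := hFTC
    _ = -F ts := by rw [hFτ]; ring
    _ < ts ^ (1-α) / (α-1) := hlast
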